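/- arXiv:1111.3469 — 5 statements merged into one kernel-verified Lean document; each statement's English description precedes it below -/
import Mathlib

section
/- If H is a normal subgroup of a finite group G, then H is expansive in G; more generally, if the normalizer N_G(H) is normal in G, then H is expansive in G. -/
/-- `H ^ g = g⁻¹ H g`, the conjugate of `H` by `g`. -/
def conjSub {G : Type*} [Group G] (H : Subgroup G) (g : G) : Subgroup G :=
  Subgroup.map (MulAut.conj g⁻¹).toMonoidHom H

/-- A subgroup `H` of `G` is *expansive* if for every `g ∈ G \ N_G(H)`, the
intersection over `n ∈ N_G(H)` of the subgroups `(H^{gn} ∩ N_G(H))·H` strictly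
contains `H`. -/
def IsExpansive {G : Type*} [Group G] (H : Subgroup G) : Prop :=
  ∀ g : G, g ∉ (Subgroup.normalizer (H : Set G)) →
    H < ⨅ n ∈ (Subgroup.normalizer (H : Set G)), (conjSub H (g * n) ⊓ (Subgroup.normalizer (H : Set G))) ⊔ H

lemma mem_conjSub {G : Type*} [Group G] {H : Subgroup G} {g x : G} :
    x ∈ conjSub H g ↔ g * x * g⁻¹ ∈ H := by
  constructor
  · rintro ⟨h, hh, rfl⟩
    simpa [MulAut.conj_apply, mul_assoc] using hh
  · intro hx
    exact ⟨g * x * g⁻¹, hx, by simp [MulAut.conj_apply]; group⟩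

lemma conjSub_normalizer {G : Type*} [Group G] (H : Subgroup G) (g : G) :
    Subgroup.normalizer (conjSub H g : Set G) = conjSub (Subgroup.normalizer (H : Set G)) g :=
  (Subgroup.map_equiv_normalizer_eq H (MulAut.conj g⁻¹)).symm

lemma conjSub_eq_of_normal {G : Type*} [Group G] {N : Subgroup G} (hN : N.Normal) (g : G) :
    conjSub N g = N := by
  ext x
  rw [mem_conjSub]
  constructor
  · intro h
    simpa [mul_assoc] using hN.conj_mem _ h g⁻¹
  · intro h
    exact hN.conj_mem _ h g

lemma card_conjSub {G : Type*} [Group G] (H : Subgroup G) (g : G) :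
    Nat.card (conjSub H g) = Nat.card H :=
  (Nat.card_congr (H.equivMapOfInjective _ (MulAut.conj g⁻¹).injective).toEquiv).symm

/-- If `H ⊴ G` then `H` is expansive in `G`; more generally, if `N_G(H) ⊴ G`
then `H` is expansive in `G`. -/
theorem expansive_of_normal_or_normalizer_normal
    {G : Type*} [Group G] [Finite G] (H : Subgroup G) :
    (H.Normal → IsExpansive H) ∧ ((Subgroup.normalizer (H : Set G)).Normal → IsExpansive H) := by
  have main : (Subgroup.normalizer (H : Set G)).Normal → IsExpansive H := by
    intro hN g hg
    set N := Subgroup.normalizer (H : Set G) with hNdef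
    have hle : conjSub H g ≤ N := by
      have h1 : conjSub H g ≤ conjSub N g := Subgroup.map_mono Subgroup.le_normalizer
      rwa [conjSub_eq_of_normal hN] at h1
    have hnrm : Subgroup.normalizer (conjSub H g : Set G) = N := by
      rw [conjSub_normalizer, conjSub_eq_of_normal hN]
    have hconst : ∀ n ∈ N, conjSub H (g * n) = conjSub H g := by
      intro n hn
      have hn' : ∀ x, x ∈ conjSub H g ↔ n * x * n⁻¹ ∈ conjSub H g :=
        Subgroup.mem_normalizer_iff.mp (hnrm ▸ hn)
      ext x
      rw [mem_conjSub, show g * n * x * (g * n)⁻¹ = g * (n * x * n⁻¹) * g⁻¹ by group,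
        ← mem_conjSub]
      exact (hn' x).symm
    have hinf : (⨅ n ∈ N, (conjSub H (g * n) ⊓ N) ⊔ H) = conjSub H g ⊔ H := by
      apply le_antisymm
      · calc (⨅ n ∈ N, (conjSub H (g * n) ⊓ N) ⊔ H) ≤ (conjSub H (g * 1) ⊓ N) ⊔ H :=
              biInf_le _ (one_mem N)
          _ ≤ conjSub H g ⊔ H := by rw [mul_one]; exact sup_le_sup_right inf_le_left _
      · refine le_iInf fun n => le_iInf fun hn => ?_
        rw [hconst n hn]
        exact sup_le_sup_right (le_inf le_rfl hle) _
    rw [hNdef] at hinf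
    rw [hinf]
    have hne : ¬ conjSub H g ≤ H := by
      intro hle'
      have heq : conjSub H g = H :=
        Subgroup.eq_of_le_of_card_ge hle' (card_conjSub H g).ge
      exact hg (Subgroup.mem_normalizer_iff.mpr fun h => by rw [← mem_conjSub, heq])
    exact right_lt_sup.mpr hne
  refine ⟨fun hHn => main ?_, main⟩
  have h2 : Subgroup.normalizer (H : Set G) = ⊤ := Subgroup.normalizer_eq_top_iff.mpr hHn
  rw [h2]
  infer_instance
end

section
/- Let P be a finite p-group with [P,P] ≤ Z(P). Then the diagonal subgroup Δ(P) is expansive in P × P. -/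
/-- `Z_G(Q)`: the subgroup of `N_G(Q)` containing `Q` with
`Z_G(Q)/Q = Z(N_G(Q)/Q)`. -/
def Zsub {G : Type*} [Group G] (Q : Subgroup G) : Subgroup G :=
  Subgroup.map (Subgroup.normalizer (Q : Set G)).subtype
    (Subgroup.comap (QuotientGroup.mk' (Q.subgroupOf (Subgroup.normalizer (Q : Set G))))
      (Subgroup.center ((Subgroup.normalizer (Q : Set G)) ⧸ Q.subgroupOf (Subgroup.normalizer (Q : Set G)))))

/-- `Q` is expansive in the finite `p`-group `G`:
for all `g`, `Q^g ∩ Z_G(Q) ≤ Q` implies `Q^g = Q`. -/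
def IsExpansiveP {G : Type*} [Group G] (Q : Subgroup G) : Prop :=
  ∀ g : G, conjSub Q g ⊓ Zsub Q ≤ Q → conjSub Q g = Q

/-- The diagonal subgroup of `P × P`. -/
def diagSubgroup (P : Type*) [Group P] : Subgroup (P × P) :=
  ((MonoidHom.id P).prod (MonoidHom.id P)).range

section
variable {P : Type*} [Group P]

lemma mem_diag {u v : P} : (u, v) ∈ diagSubgroup P ↔ u = v := by
  constructor
  · rintro ⟨x, hx⟩
    simp [Prod.ext_iff] at hx
    exact hx.1.symm.trans hx.2
  · rintro rfl
    exact ⟨u, rfl⟩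

lemma conj_central (z v x : P) (hz : ∀ g, g * z = z * g) :
    (z*v)⁻¹ * x * (z*v) = v⁻¹ * x * v := by
  have h1 : z⁻¹ * x * z = x := by
    rw [mul_assoc, hz, ← mul_assoc, inv_mul_cancel, one_mul]
  calc (z*v)⁻¹ * x * (z*v) = v⁻¹ * (z⁻¹ * x * z) * v := by group
    _ = v⁻¹ * x * v := by rw [h1]

lemma aux_comm (v b z w : P) (hz : ∀ g, g * z = z * g) (hw : ∀ g, g * w = w * g) :
    (z*v)⁻¹ * (w*b)⁻¹ * (z*v) * (w*b) = v⁻¹ * b⁻¹ * v * b := by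
  calc (z*v)⁻¹ * (w*b)⁻¹ * (z*v) * (w*b)
      = (z*v)⁻¹ * ((w*b)⁻¹ * (z*v) * (w*b)) := by group
    _ = (z*v)⁻¹ * (b⁻¹ * (z*v) * b) := by rw [conj_central w b _ hw]
    _ = ((z*v)⁻¹ * b⁻¹ * (z*v)) * b := by group
    _ = (v⁻¹ * b⁻¹ * v) * b := by rw [conj_central z v _ hz]

lemma aux_comm' (u v a b : P) (hz : u * v⁻¹ ∈ Subgroup.center P)
    (hw : a * b⁻¹ ∈ Subgroup.center P) :
    u⁻¹ * a⁻¹ * u * a = v⁻¹ * b⁻¹ * v * b := by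
  have := aux_comm v b (u*v⁻¹) (a*b⁻¹) (Subgroup.mem_center_iff.mp hz)
    (Subgroup.mem_center_iff.mp hw)
  simpa [inv_mul_cancel_right] using this

lemma mem_normalizer_diag {a b : P} :
    (a, b) ∈ Subgroup.normalizer ((diagSubgroup P : Set (P × P))) ↔ a * b⁻¹ ∈ Subgroup.center P := by
  rw [Subgroup.mem_normalizer_iff]
  constructor
  · intro hn
    have hc' : b⁻¹ * a ∈ Subgroup.center P := by
      rw [Subgroup.mem_center_iff]
      intro y
      have := (hn (y, y)).mp (mem_diag.mpr rfl)
      have h2 : a * y * a⁻¹ = b * y * b⁻¹ := by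
        simpa using mem_diag.mp this
      calc y * (b⁻¹ * a) = b⁻¹ * (b * y * b⁻¹) * a := by group
        _ = b⁻¹ * (a * y * a⁻¹) * a := by rw [h2]
        _ = (b⁻¹ * a) * y := by group
    have : a * b⁻¹ = b * (b⁻¹ * a) * b⁻¹ := by group
    rw [this]
    exact (inferInstance : (Subgroup.center P).Normal).conj_mem _ hc' b
  · intro hc ⟨k1, k2⟩
    have hcy := Subgroup.mem_center_iff.mp hc
    have hc2 : b⁻¹ * a ∈ Subgroup.center P := by
      have : b⁻¹ * a = b⁻¹ * (a * b⁻¹) * (b⁻¹)⁻¹ := by group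
      rw [this]
      exact (inferInstance : (Subgroup.center P).Normal).conj_mem _ hc b⁻¹
    have hcy2 := Subgroup.mem_center_iff.mp hc2
    constructor
    · intro hk
      have hk' : k1 = k2 := mem_diag.mp hk
      subst hk'
      show (a * k1 * a⁻¹, b * k1 * b⁻¹) ∈ diagSubgroup P
      rw [mem_diag]
      calc a * k1 * a⁻¹ = (a*b⁻¹) * (b*k1*b⁻¹) * (a*b⁻¹)⁻¹ := by group
        _ = b * k1 * b⁻¹ := by rw [← hcy (b*k1*b⁻¹), mul_inv_cancel_right]
    · intro hk
      have hk' : a * k1 * a⁻¹ = b * k2 * b⁻¹ := by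
        have h3 : ((a,b) * (k1,k2) * (a,b)⁻¹) = (a * k1 * a⁻¹, b * k2 * b⁻¹) := rfl
        rw [h3] at hk
        exact mem_diag.mp hk
      rw [mem_diag]
      have hk2 : k2 = k1 := by
        calc k2 = b⁻¹ * (b * k2 * b⁻¹) * b := by group
          _ = b⁻¹ * (a * k1 * a⁻¹) * b := by rw [hk']
          _ = (b⁻¹*a) * k1 * (b⁻¹*a)⁻¹ := by group
          _ = k1 := by rw [← hcy2 k1, mul_inv_cancel_right]
      exact hk2.symm
end

open scoped commutatorElement

/-- If `P` is a finite `p`-group with `[P,P] ≤ Z(P)`, then the diagonal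
`Δ(P)` is expansive in `P × P`. -/
theorem diag_expansive_of_commutator_le_center {p : ℕ} [Fact p.Prime]
    (P : Type*) [Group P] [Finite P] (hP : IsPGroup p P)
    (h : commutator P ≤ Subgroup.center P) :
    IsExpansiveP (diagSubgroup P) := by
  rintro ⟨g, k⟩ H
  have hz : ∀ a b : P, ⁅a, b⁆ ∈ Subgroup.center P := fun a b =>
    h (by rw [commutator_def]
          exact Subgroup.commutator_mem_commutator (Subgroup.mem_top a) (Subgroup.mem_top b))
  have key : ∀ x : P, g⁻¹ * x * g = k⁻¹ * x * k := by
    intro x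
    set u := g⁻¹ * x * g with hu
    set v := k⁻¹ * x * k with hv
    have hcen : u * v⁻¹ ∈ Subgroup.center P := by
      have h1 : u * v⁻¹ = g⁻¹ * ⁅x, g * k⁻¹⁆ * (g⁻¹)⁻¹ := by
        rw [hu, hv, commutatorElement_def]; group
      rw [h1]
      exact (inferInstance : (Subgroup.center P).Normal).conj_mem _ (hz x (g*k⁻¹)) g⁻¹
    have heC : ((u, v) : P × P) ∈ conjSub (diagSubgroup P) (g, k) := by
      refine ⟨(x, x), ⟨x, rfl⟩, ?_⟩
      show ((g, k) : P × P)⁻¹ * (x, x) * ((g,k)⁻¹)⁻¹ = (u, v)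
      rw [hu, hv]
      simp [Prod.ext_iff]
    have heN : ((u, v) : P × P) ∈ Subgroup.normalizer ((diagSubgroup P : Set (P × P))) :=
      mem_normalizer_diag.mpr hcen
    have heZ : ((u, v) : P × P) ∈ Zsub (diagSubgroup P) := by
      refine ⟨⟨(u, v), heN⟩, ?_, rfl⟩
      rw [SetLike.mem_coe, Subgroup.mem_comap]
      refine Subgroup.mem_center_iff.mpr fun q => ?_
      induction q using QuotientGroup.induction_on with
      | H n =>
        obtain ⟨⟨a, b⟩, hn⟩ := n
        have hab : a * b⁻¹ ∈ Subgroup.center P := mem_normalizer_diag.mp hn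
        show (QuotientGroup.mk _ : _) * QuotientGroup.mk _ = QuotientGroup.mk _ * QuotientGroup.mk _
        rw [← QuotientGroup.mk_mul, ← QuotientGroup.mk_mul, QuotientGroup.eq,
          Subgroup.mem_subgroupOf]
        show ((((a,b) : P×P) * (u,v))⁻¹ * ((u,v) * (a,b)) : P × P) ∈ diagSubgroup P
        have hcomp : ((((a,b) : P×P) * (u,v))⁻¹ * ((u,v) * (a,b)) : P × P)
            = ((a*u)⁻¹ * (u*a), (b*v)⁻¹ * (v*b)) := rfl
        rw [hcomp, mem_diag]
        calc (a*u)⁻¹ * (u*a) = u⁻¹ * a⁻¹ * u * a := by group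
          _ = v⁻¹ * b⁻¹ * v * b := aux_comm' u v a b hcen hab
          _ = (b*v)⁻¹ * (v*b) := by group
    have := mem_diag.mp (H ⟨heC, heZ⟩)
    rw [hu, hv] at this
    exact this
  ext ⟨c, d⟩
  constructor
  · rintro ⟨⟨y1, y2⟩, hy, hconj⟩
    have hyeq : y1 = y2 := mem_diag.mp hy
    subst hyeq
    have hc : (((g, k) : P × P)⁻¹ * (y1, y1) * ((g,k)⁻¹)⁻¹) = (c, d) := hconj
    rw [Prod.ext_iff] at hc
    obtain ⟨h1, h2⟩ := hc
    simp only [inv_inv] at h1 h2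
    rw [mem_diag]
    rw [show c = g⁻¹ * y1 * g from h1.symm, show d = k⁻¹ * y1 * k from h2.symm]
    exact key y1
  · intro hcd
    have hcd' : c = d := mem_diag.mp hcd
    subst hcd'
    refine ⟨(g * c * g⁻¹, g * c * g⁻¹), ⟨g * c * g⁻¹, rfl⟩, ?_⟩
    show ((g, k) : P × P)⁻¹ * (g * c * g⁻¹, g * c * g⁻¹) * ((g,k)⁻¹)⁻¹ = (c, c)
    have h1 : g⁻¹ * (g * c * g⁻¹) * g = c := by group
    have h2 : k⁻¹ * (g * c * g⁻¹) * k = c := by rw [← key (g * c * g⁻¹), h1]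
    rw [Prod.ext_iff]
    constructor
    · show g⁻¹ * (g * c * g⁻¹) * g⁻¹⁻¹ = c
      rw [inv_inv]; exact h1
    · show k⁻¹ * (g * c * g⁻¹) * k⁻¹⁻¹ = c
      rw [inv_inv]; exact h2
end

section
/- Let P = Q_8. For every automorphism θ of P there exists u ∈ P such that for all h ∈ P with θ(h)h^{-1} ∈ Z(P), one has θ(h) = u^{-1}hu and θ^{-1}(h) = uhu^{-1}. -/
open QuaternionGroup in
/-- The value of a homomorphism on any element of `Q₈`, given its values `x` on `a 1`
and `y` on `xa 0`. -/
def q8word (x y : QuaternionGroup 2) : QuaternionGroup 2 → QuaternionGroup 2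
  | .a m => x ^ m.val
  | .xa m => y * x ^ m.val

open QuaternionGroup in
lemma q8word_spec (θ : MulAut (QuaternionGroup 2)) (h : QuaternionGroup 2) :
    θ h = q8word (θ (.a 1)) (θ (.xa 0)) h := by
  have ha : ∀ m : ZMod 4, (a m : QuaternionGroup 2) = (.a 1) ^ m.val := by decide
  rcases h with m | m
  · conv_lhs => rw [ha m]
    rw [map_pow]; rfl
  · have : (xa m : QuaternionGroup 2) = xa 0 * a m := by
      rw [xa_mul_a, zero_add]
    conv_lhs => rw [this, map_mul, ha m]
    rw [map_pow]; rfl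

open QuaternionGroup in
set_option maxRecDepth 10000 in
lemma q8_main : ∀ x y : QuaternionGroup 2, x * x = .a 2 → y * y = .a 2 →
    x * y ≠ y * x →
    ∃ u : QuaternionGroup 2, ∀ h : QuaternionGroup 2,
      (q8word x y h * h⁻¹ = 1 ∨ q8word x y h * h⁻¹ = .a 2) →
        q8word x y h = u⁻¹ * h * u ∧ q8word x y (u * h * u⁻¹) = h := by
  decide

open QuaternionGroup in
lemma q8_center (w : QuaternionGroup 2) :
    w ∈ Subgroup.center (QuaternionGroup 2) ↔ w = 1 ∨ w = .a 2 := by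
  rw [Subgroup.mem_center_iff]
  exact (by decide : ∀ w : QuaternionGroup 2,
    (∀ g, g * w = w * g) ↔ (w = 1 ∨ w = .a 2)) w

open QuaternionGroup in
lemma q8_fix_center (θ : MulAut (QuaternionGroup 2)) : θ (.a 2) = .a 2 := by
  have h1 : θ (.a 2) * θ (.a 2) = 1 := by
    rw [← map_mul]
    have : (a 2 : QuaternionGroup 2) * a 2 = 1 := by decide
    rw [this, map_one]
  have h2 : θ (.a 2) ≠ 1 := by
    intro e
    have := θ.injective (e.trans (map_one θ).symm)
    exact absurd this (by decide)
  exact (by decide : ∀ w : QuaternionGroup 2, w * w = 1 → w ≠ 1 → w = .a 2)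
    _ h1 h2

/-- For every automorphism `θ` of `Q₈` there is `u ∈ Q₈` such that for all `h`
with `θ(h)h⁻¹` central, one has `θ(h) = u⁻¹hu` and `θ⁻¹(h) = uhu⁻¹`. -/
theorem q8_automorphism_partially_inner (θ : MulAut (QuaternionGroup 2)) :
    ∃ u : QuaternionGroup 2, ∀ h : QuaternionGroup 2,
      θ h * h⁻¹ ∈ Subgroup.center (QuaternionGroup 2) →
        θ h = u⁻¹ * h * u ∧ θ⁻¹ h = u * h * u⁻¹ := by
  set x := θ (QuaternionGroup.a 1) with hxdef
  set y := θ (QuaternionGroup.xa 0) with hydef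
  have hx : x * x = QuaternionGroup.a 2 := by
    rw [hxdef, ← map_mul]
    have : (QuaternionGroup.a 1 : QuaternionGroup 2) * .a 1 = .a 2 := by decide
    rw [this, q8_fix_center]
  have hy : y * y = QuaternionGroup.a 2 := by
    rw [hydef, ← map_mul]
    have : (QuaternionGroup.xa 0 : QuaternionGroup 2) * .xa 0 = .a 2 := by decide
    rw [this, q8_fix_center]
  have hxy : x * y ≠ y * x := by
    rw [hxdef, hydef, ← map_mul, ← map_mul]
    intro e
    have := θ.injective e
    exact absurd this (by decide)
  obtain ⟨u, hu⟩ := q8_main x y hx hy hxy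
  refine ⟨u, fun h hc => ?_⟩
  rw [q8_center] at hc
  rw [q8word_spec θ h] at hc ⊢
  obtain ⟨h1, h2⟩ := hu h hc
  refine ⟨h1, ?_⟩
  have hth : θ (u * h * u⁻¹) = h := by rw [q8word_spec θ]; exact h2
  rw [MulAut.inv_def]
  exact (θ.symm_apply_eq).mpr hth.symm
end

section
/- Let P and Q be nontrivial finite p-groups with central subgroups Z_P ≤ Z(P) and Z_Q ≤ Z(Q) of order p, and φ : Z_P → Z_Q an isomorphism. Then the center of the central product P *_φ Q = (P × Q)/{(z, φ(z)^{-1}) : z ∈ Z_P} equals the image of Z(P) × Z(Q); it is cyclic if and only if both Z(P) and Z(Q) are cyclic and at least one of them has order p. -/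
/-- Let `P, Q` be nontrivial finite `p`-groups, `Z_P ≤ Z(P)`, `Z_Q ≤ Z(Q)` of
order `p`, and `φ : Z_P ≃* Z_Q`.  Let `N = {(z, φ(z)⁻¹) : z ∈ Z_P}`, so that
`P *_φ Q = (P × Q)/N` is the central product.  Then the center of `P *_φ Q` is
the image of `Z(P) × Z(Q)`, and it is cyclic iff both `Z(P)` and `Z(Q)` are
cyclic and at least one of them has order `p`. -/
theorem center_of_central_product {p : ℕ} [Fact p.Prime]
    {P Q : Type*} [Group P] [Group Q] [Finite P] [Finite Q]
    [Nontrivial P] [Nontrivial Q]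
    (hP : IsPGroup p P) (hQ : IsPGroup p Q)
    (ZP : Subgroup P) (ZQ : Subgroup Q)
    (hZP : ZP ≤ Subgroup.center P) (hZQ : ZQ ≤ Subgroup.center Q)
    (hZPcard : Nat.card ZP = p) (hZQcard : Nat.card ZQ = p)
    (φ : ZP ≃* ZQ)
    (N : Subgroup (P × Q)) [N.Normal]
    (hN : N = Subgroup.closure {x : P × Q | ∃ z : ZP, x = ((z : P), ((φ z : Q))⁻¹)}) :
    Subgroup.center ((P × Q) ⧸ N) =
      Subgroup.map (QuotientGroup.mk' N)
        ((Subgroup.center P).prod (Subgroup.center Q)) ∧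
    (IsCyclic (Subgroup.center ((P × Q) ⧸ N)) ↔
      IsCyclic (Subgroup.center P) ∧ IsCyclic (Subgroup.center Q) ∧
        (Nat.card (Subgroup.center P) = p ∨ Nat.card (Subgroup.center Q) = p)) := by
  have hp1 : 1 < p := (Fact.out (p := p.Prime)).one_lt
  -- the hom whose range is N
  have hcomm : ∀ (z : ZQ) (q : Q), q * (z : Q) = (z : Q) * q := fun z q =>
    (Subgroup.mem_center_iff.mp (hZQ z.2) q).symm ▸
      (Subgroup.mem_center_iff.mp (hZQ z.2) q)
  let g : ZP →* P × Q :=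
    { toFun := fun z => ((z : P), ((φ z : Q))⁻¹)
      map_one' := by simp
      map_mul' := by
        intro z w
        refine Prod.ext rfl ?_
        simp only [map_mul, Prod.snd_mul]
        push_cast [mul_inv_rev]
        have h1 : ((φ z : Q))⁻¹ ∈ Subgroup.center Q :=
          (Subgroup.center Q).inv_mem (hZQ (φ z).2)
        exact Subgroup.mem_center_iff.mp h1 ((φ w : Q))⁻¹ }
  have hmem : ∀ x : P × Q, x ∈ N ↔ ∃ z : ZP, x = ((z : P), ((φ z : Q))⁻¹) := by
    intro x
    have hset : {x : P × Q | ∃ z : ZP, x = ((z : P), ((φ z : Q))⁻¹)} = ↑g.range := by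
      ext y
      simp only [Set.mem_setOf_eq, SetLike.mem_coe, MonoidHom.mem_range]
      exact ⟨fun ⟨z, hz⟩ => ⟨z, hz.symm⟩, fun ⟨z, hz⟩ => ⟨z, hz.symm⟩⟩
    rw [hN, hset, Subgroup.closure_eq, MonoidHom.mem_range]
    exact ⟨fun ⟨z, hz⟩ => ⟨z, hz.symm⟩, fun ⟨z, hz⟩ => ⟨z, hz.symm⟩⟩
  -- Part 1
  have hpart1 : Subgroup.center ((P × Q) ⧸ N) =
      Subgroup.map (QuotientGroup.mk' N)
        ((Subgroup.center P).prod (Subgroup.center Q)) := by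
    apply le_antisymm
    · intro q hq
      obtain ⟨⟨a, b⟩, rfl⟩ := QuotientGroup.mk'_surjective N q
      have key : ∀ x : P, ∀ y : Q, (x * a = a * x) ∧ (y * b = b * y) := by
        intro x y
        have h1 := Subgroup.mem_center_iff.mp hq (QuotientGroup.mk' N (x, 1))
        have h2 := Subgroup.mem_center_iff.mp hq (QuotientGroup.mk' N (1, y))
        rw [← map_mul, ← map_mul] at h1 h2
        have h1' : ((x, (1:Q)) * (a, b))⁻¹ * ((a, b) * (x, 1)) ∈ N :=
          QuotientGroup.eq.mp h1
        have h2' : (((1:P), y) * (a, b))⁻¹ * ((a, b) * (1, y)) ∈ N :=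
          QuotientGroup.eq.mp h2
        rw [hmem] at h1' h2'
        obtain ⟨z1, hz1⟩ := h1'
        obtain ⟨z2, hz2⟩ := h2'
        obtain ⟨hz11, hz12⟩ := Prod.ext_iff.mp hz1
        obtain ⟨hz21, hz22⟩ := Prod.ext_iff.mp hz2
        simp only [Prod.fst_mul, Prod.snd_mul, Prod.fst_inv, Prod.snd_inv, one_mul,
          mul_one] at hz11 hz12 hz21 hz22
        -- from hz12 : b⁻¹ * b = (φ z1)⁻¹, get z1 = 1
        have hz1one : z1 = 1 := by
          have h0 : ((φ z1 : Q))⁻¹ = 1 := by rw [← hz12]; simp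
          rw [inv_eq_one] at h0
          have h0' : φ z1 = 1 := Subtype.ext (by exact_mod_cast h0)
          simpa using φ.injective (h0'.trans (map_one φ).symm)
        have hz2one : z2 = 1 := by
          have h0 : (z2 : P) = 1 := by rw [← hz21]; simp
          exact Subtype.ext (by simpa using h0)
        constructor
        · have h3 : (x * a)⁻¹ * (a * x) = 1 := by
            rw [hz11, hz1one]; simp
          rw [inv_mul_eq_one] at h3
          exact h3
        · have h3 : (y * b)⁻¹ * (b * y) = 1 := by
            rw [hz22, hz2one]; simp
          rw [inv_mul_eq_one] at h3
          exact h3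
      exact ⟨(a, b), ⟨Subgroup.mem_center_iff.mpr fun x => (key x 1).1,
        Subgroup.mem_center_iff.mpr fun y => (key 1 y).2⟩, rfl⟩
    · rintro q ⟨⟨a, b⟩, ⟨ha, hb⟩, rfl⟩
      rw [Subgroup.mem_center_iff]
      intro x
      induction x using QuotientGroup.induction_on with
      | H x =>
        obtain ⟨u, v⟩ := x
        show QuotientGroup.mk' N _ * QuotientGroup.mk' N _ =
          QuotientGroup.mk' N _ * QuotientGroup.mk' N _
        rw [← map_mul, ← map_mul]
        congr 1
        exact Prod.ext (Subgroup.mem_center_iff.mp ha u)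
          (Subgroup.mem_center_iff.mp hb v)
  refine ⟨hpart1, ?_⟩
  -- Part 2 setup
  set A := Subgroup.center P with hA
  set B := Subgroup.center Q with hB
  let e1 : A × B →* (P × Q) ⧸ N :=
    (QuotientGroup.mk' N).comp (A.subtype.prodMap B.subtype)
  have he1 : ∀ ab : A × B, e1 ab = QuotientGroup.mk' N ((ab.1 : P), (ab.2 : Q)) := fun _ => rfl
  have hker : ∀ ab : A × B,
      ab ∈ e1.ker ↔ ∃ z : ZP, (ab.1 : P) = (z : P) ∧ (ab.2 : Q) = ((φ z : Q))⁻¹ := by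
    intro ab
    rw [MonoidHom.mem_ker, he1]
    have : QuotientGroup.mk' N ((ab.1 : P), (ab.2 : Q)) = 1 ↔
        ((ab.1 : P), (ab.2 : Q)) ∈ N := by
      rw [← MonoidHom.mem_ker, QuotientGroup.ker_mk']
    rw [this, hmem]
    constructor
    · rintro ⟨z, hz⟩
      exact ⟨z, (Prod.ext_iff.mp hz).1, (Prod.ext_iff.mp hz).2⟩
    · rintro ⟨z, h1, h2⟩
      exact ⟨z, Prod.ext h1 h2⟩
  have hrange : e1.range = Subgroup.map (QuotientGroup.mk' N) (A.prod B) := by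
    ext x
    simp only [MonoidHom.mem_range, Subgroup.mem_map]
    constructor
    · rintro ⟨⟨a, b⟩, rfl⟩
      exact ⟨((a : P), (b : Q)), ⟨a.2, b.2⟩, rfl⟩
    · rintro ⟨⟨a, b⟩, ⟨ha, hb⟩, rfl⟩
      exact ⟨(⟨a, ha⟩, ⟨b, hb⟩), rfl⟩
  -- the big equivalence
  have hrange' : e1.range = Subgroup.center ((P × Q) ⧸ N) := hrange.trans hpart1.symm
  let E : (A × B) ⧸ e1.ker ≃* Subgroup.center ((P × Q) ⧸ N) :=
    (QuotientGroup.quotientKerEquivRange e1).trans (MulEquiv.subgroupCongr hrange')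
  -- card of the kernel
  have hkercard : Nat.card e1.ker = p := by
    rw [← hZPcard]
    symm
    apply Nat.card_eq_of_bijective
      (fun (z : ZP) => (⟨(⟨(z : P), hZP z.2⟩, ⟨((φ z : Q))⁻¹,
        B.inv_mem (hZQ (φ z).2)⟩), (hker _).mpr ⟨z, rfl, rfl⟩⟩ : e1.ker))
    constructor
    · intro z w h
      have h1 : (z : P) = (w : P) :=
        congrArg (fun x : e1.ker => (((x : A × B)).1 : P)) h
      exact Subtype.ext h1
    · rintro ⟨⟨a, b⟩, hab⟩
      obtain ⟨z, h1, h2⟩ := (hker _).mp hab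
      refine ⟨z, ?_⟩
      apply Subtype.ext
      exact Prod.ext (Subtype.ext h1.symm) (Subtype.ext h2.symm)
  have hcardeq : Nat.card A * Nat.card B = Nat.card (Subgroup.center ((P × Q) ⧸ N)) * p := by
    rw [← Nat.card_congr E.toEquiv, ← hkercard, ← Nat.card_prod]
    exact Subgroup.card_eq_card_quotient_mul_card_subgroup e1.ker
  constructor
  · -- forward direction
    intro hc
    -- A and B are cyclic
    have hAcyc : IsCyclic A := by
      let ι : A →* Subgroup.center ((P × Q) ⧸ N) :=
        { toFun := fun a => ⟨QuotientGroup.mk' N ((a : P), 1),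
            hpart1 ▸ ⟨((a : P), 1), ⟨a.2, Subgroup.one_mem _⟩, rfl⟩⟩
          map_one' := by simp; exact N.one_mem
          map_mul' := fun a b => by
            apply Subtype.ext
            show QuotientGroup.mk' N _ = QuotientGroup.mk' N _ * QuotientGroup.mk' N _
            rw [← map_mul]
            congr 1
            simp }
      have hinj : Function.Injective ι := by
        intro a b h
        have h' : QuotientGroup.mk' N ((a : P), (1:Q)) = QuotientGroup.mk' N ((b : P), 1) :=
          congrArg Subtype.val h
        have := QuotientGroup.eq.mp h'
        rw [hmem] at this
        obtain ⟨z, hz⟩ := this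
        obtain ⟨h1, h2⟩ := Prod.ext_iff.mp hz
        simp only [Prod.fst_mul, Prod.snd_mul, Prod.fst_inv, Prod.snd_inv, one_mul,
          mul_one] at h1 h2
        have hz1 : z = 1 := by
          have h5 : ((φ z : Q))⁻¹ = 1 := by rw [← h2]; simp
          rw [inv_eq_one] at h5
          have h6 : φ z = 1 := Subtype.ext (by exact_mod_cast h5)
          simpa using φ.injective (h6.trans (map_one φ).symm)
        rw [hz1] at h1
        apply Subtype.ext
        have h4 : (a : P)⁻¹ * (b : P) = 1 := by rw [h1]; simp
        rw [inv_mul_eq_one] at h4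
        exact h4
      exact isCyclic_of_surjective (MonoidHom.ofInjective hinj).symm
        (MonoidHom.ofInjective hinj).symm.surjective
    have hBcyc : IsCyclic B := by
      let ι : B →* Subgroup.center ((P × Q) ⧸ N) :=
        { toFun := fun b => ⟨QuotientGroup.mk' N ((1 : P), (b : Q)),
            hpart1 ▸ ⟨((1 : P), (b : Q)), ⟨Subgroup.one_mem _, b.2⟩, rfl⟩⟩
          map_one' := by simp; exact N.one_mem
          map_mul' := fun a b => by
            apply Subtype.ext
            show QuotientGroup.mk' N _ = QuotientGroup.mk' N _ * QuotientGroup.mk' N _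
            rw [← map_mul]
            congr 1
            simp }
      have hinj : Function.Injective ι := by
        intro a b h
        have h' : QuotientGroup.mk' N ((1:P), (a : Q)) = QuotientGroup.mk' N (1, (b : Q)) :=
          congrArg Subtype.val h
        have := QuotientGroup.eq.mp h'
        rw [hmem] at this
        obtain ⟨z, hz⟩ := this
        obtain ⟨h1, h2⟩ := Prod.ext_iff.mp hz
        simp only [Prod.fst_mul, Prod.snd_mul, Prod.fst_inv, Prod.snd_inv, one_mul,
          mul_one] at h1 h2
        have hz1 : z = 1 := by
          have : (z : P) = 1 := by rw [← h1]; simp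
          exact Subtype.ext (by simpa using this)
        rw [hz1] at h2
        apply Subtype.ext
        have h4 : (a : Q)⁻¹ * (b : Q) = 1 := by rw [h2]; simp
        rw [inv_mul_eq_one] at h4
        exact h4
      exact isCyclic_of_surjective (MonoidHom.ofInjective hinj).symm
        (MonoidHom.ofInjective hinj).symm.surjective
    refine ⟨hAcyc, hBcyc, ?_⟩
    -- now the card statement
    obtain ⟨m, hm⟩ := (hP.to_subgroup A).exists_card_eq
    obtain ⟨n, hn⟩ := (hQ.to_subgroup B).exists_card_eq
    have hm1 : 1 ≤ m := by
      by_contra h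
      have : m = 0 := by omega
      rw [this, pow_zero] at hm
      have := hP.center_nontrivial
      have := Finite.one_lt_card (α := A)
      omega
    have hn1 : 1 ≤ n := by
      by_contra h
      have : n = 0 := by omega
      rw [this, pow_zero] at hn
      have := hQ.center_nontrivial
      have := Finite.one_lt_card (α := B)
      omega
    set M := max m n with hM
    -- exponent bound
    have hpow : ∀ x : Subgroup.center ((P × Q) ⧸ N), x ^ (p ^ M) = 1 := by
      intro x
      obtain ⟨y, rfl⟩ := E.surjective x
      rw [← map_pow, ← map_one E]
      congr 1
      obtain ⟨ab, rfl⟩ := QuotientGroup.mk'_surjective e1.ker y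
      rw [← map_pow, ← map_one (QuotientGroup.mk' e1.ker)]
      congr 1
      have hauxA : ∀ a : A, a ^ (p ^ M) = 1 := by
        intro a
        have hle : m ≤ M := le_max_left m n
        have he : p ^ M = p ^ m * p ^ (M - m) := by
          rw [← pow_add]
          congr 1
          omega
        rw [he, pow_mul, ← hm, pow_card_eq_one', one_pow]
      have hauxB : ∀ b : B, b ^ (p ^ M) = 1 := by
        intro b
        have hle : n ≤ M := le_max_right m n
        have he : p ^ M = p ^ n * p ^ (M - n) := by
          rw [← pow_add]
          congr 1
          omega
        rw [he, pow_mul, ← hn, pow_card_eq_one', one_pow]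
      refine Prod.ext ?_ ?_
      · rw [Prod.pow_fst, Prod.fst_one]
        exact hauxA ab.1
      · rw [Prod.pow_snd, Prod.snd_one]
        exact hauxB ab.2
    have hdvd : Nat.card (Subgroup.center ((P × Q) ⧸ N)) ∣ p ^ M := by
      rw [← IsCyclic.exponent_eq_card]
      exact Monoid.exponent_dvd_iff_forall_pow_eq_one.mpr hpow
    have hdvd2 : p ^ (m + n) ∣ p ^ (M + 1) := by
      rw [pow_add, pow_add, ← hm, ← hn, pow_one, hcardeq]
      exact mul_dvd_mul hdvd dvd_rfl
    have hle : m + n ≤ M + 1 := (Nat.pow_dvd_pow_iff_le_right hp1).mp hdvd2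
    have : m = 1 ∨ n = 1 := by
      rcases max_cases m n with ⟨h1, h2⟩ | ⟨h1, h2⟩ <;> omega
    rcases this with h | h
    · left; rw [hm, h, pow_one]
    · right; rw [hn, h, pow_one]
  · -- converse direction
    rintro ⟨hAcyc, hBcyc, hcard | hcard⟩
    · -- Nat.card A = p, so ZP = A
      have hZPeq : ZP = A := Subgroup.eq_of_le_of_card_ge hZP (by rw [hZPcard, hcard])
      let incl : A →* ZP := Subgroup.inclusion hZPeq.ge
      let ρ : A × B →* Q :=
        { toFun := fun ab => ((φ (incl ab.1) : Q)) * (ab.2 : Q)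
          map_one' := by simp
          map_mul' := by
            rintro ⟨a, b⟩ ⟨a', b'⟩
            show ((φ (incl (a * a')) : Q)) * ((b * b' : B) : Q) =
              ((φ (incl a) : Q)) * (b : Q) * (((φ (incl a') : Q)) * (b' : Q))
            rw [map_mul, map_mul]
            push_cast
            rw [mul_assoc, mul_assoc, ← mul_assoc (b : Q), hcomm (φ (incl a')) (b : Q),
              mul_assoc] }
      have hkerρ : ρ.ker = e1.ker := by
        ext ab
        rw [MonoidHom.mem_ker, hker]
        show ((φ (incl ab.1) : Q)) * (ab.2 : Q) = 1 ↔ _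
        constructor
        · intro h
          refine ⟨incl ab.1, (Subgroup.coe_inclusion hZPeq.ge ab.1).symm, ?_⟩
          rw [mul_eq_one_iff_inv_eq] at h
          exact h.symm
        · rintro ⟨z, h1, h2⟩
          have hz : incl ab.1 = z := Subtype.ext (by rw [Subgroup.coe_inclusion, h1])
          rw [hz, h2]
          simp
      have hrangeρ : ρ.range = B := by
        apply le_antisymm
        · rintro x ⟨⟨a, b⟩, rfl⟩
          exact B.mul_mem (hZQ (φ (incl a)).2) b.2
        · intro c hc
          exact ⟨(1, ⟨c, hc⟩), by show ((φ (incl 1) : Q)) * c = c; simp⟩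
      have F : B ≃* Subgroup.center ((P × Q) ⧸ N) :=
        ((MulEquiv.subgroupCongr hrangeρ).symm.trans
          (QuotientGroup.quotientKerEquivRange ρ).symm).trans
          ((QuotientGroup.quotientMulEquivOfEq hkerρ).trans E)
      exact isCyclic_of_surjective F F.surjective
    · -- Nat.card B = p, so ZQ = B
      have hZQeq : ZQ = B := Subgroup.eq_of_le_of_card_ge hZQ (by rw [hZQcard, hcard])
      let incl : B →* ZQ := Subgroup.inclusion hZQeq.ge
      have hcommP : ∀ (z : ZP) (q : P), q * (z : P) = (z : P) * q := fun z q =>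
        (Subgroup.mem_center_iff.mp (hZP z.2) q)
      let ρ : A × B →* P :=
        { toFun := fun ab => (ab.1 : P) * ((φ.symm (incl ab.2) : P))
          map_one' := by simp
          map_mul' := by
            rintro ⟨a, b⟩ ⟨a', b'⟩
            show ((a * a' : A) : P) * ((φ.symm (incl (b * b')) : P)) =
              (a : P) * ((φ.symm (incl b) : P)) * ((a' : P) * ((φ.symm (incl b') : P)))
            rw [map_mul, map_mul]
            push_cast
            rw [mul_assoc, mul_assoc, ← mul_assoc (φ.symm (incl b) : P),
              ← hcommP (φ.symm (incl b)) (a' : P), mul_assoc] }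
      have hkerρ : ρ.ker = e1.ker := by
        ext ab
        rw [MonoidHom.mem_ker, hker]
        show (ab.1 : P) * ((φ.symm (incl ab.2) : P)) = 1 ↔ _
        constructor
        · intro h
          refine ⟨(φ.symm (incl ab.2))⁻¹, ?_, ?_⟩
          · rw [mul_eq_one_iff_eq_inv] at h
            rw [h]
            push_cast
            rfl
          · rw [map_inv, MulEquiv.apply_symm_apply]
            simp only [Subgroup.coe_inv, inv_inv]
            exact (Subgroup.coe_inclusion hZQeq.ge ab.2).symm
        · rintro ⟨z, h1, h2⟩
          have hz : incl ab.2 = (φ z)⁻¹ :=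
            Subtype.ext (by rw [Subgroup.coe_inclusion]; simp [h2])
          rw [h1, hz, map_inv, MulEquiv.symm_apply_apply]
          push_cast
          simp
      have hrangeρ : ρ.range = A := by
        apply le_antisymm
        · rintro x ⟨⟨a, b⟩, rfl⟩
          exact A.mul_mem a.2 (hZP (φ.symm (incl b)).2)
        · intro c hc
          exact ⟨(⟨c, hc⟩, 1), by show c * ((φ.symm (incl 1) : P)) = c; simp⟩
      have F : A ≃* Subgroup.center ((P × Q) ⧸ N) :=
        ((MulEquiv.subgroupCongr hrangeρ).symm.trans
          (QuotientGroup.quotientKerEquivRange ρ).symm).trans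
          ((QuotientGroup.quotientMulEquivOfEq hkerρ).trans E)
      exact isCyclic_of_surjective F F.surjective
end

section
/- For every natural number n, the group (D_8)^n (the direct product of n copies of the dihedral group of order 8) has exactly 5^n conjugacy classes of cyclic subgroups. -/
open scoped Pointwise

lemma isCyclic_zpowers {G : Type*} [Group G] (x : G) : IsCyclic (Subgroup.zpowers x) := by
  refine ⟨⟨⟨x, Subgroup.mem_zpowers x⟩, fun a => ?_⟩⟩
  obtain ⟨k, hk⟩ := Subgroup.mem_zpowers_iff.mp a.2
  exact Subgroup.mem_zpowers_iff.mpr ⟨k, Subtype.ext (by simpa using hk)⟩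

lemma cyclic_eq_zpowers {G : Type*} [Group G] (H : Subgroup G) (h : IsCyclic H) :
    ∃ x : G, H = Subgroup.zpowers x := by
  obtain ⟨⟨g, hg⟩, hgen⟩ := h.exists_generator
  refine ⟨g, le_antisymm (fun a ha => ?_) (Subgroup.zpowers_le.mpr hg)⟩
  obtain ⟨k, hk⟩ := Subgroup.mem_zpowers_iff.mp (hgen ⟨a, ha⟩)
  exact Subgroup.mem_zpowers_iff.mpr ⟨k, by simpa using congrArg Subtype.val hk⟩

lemma conj_smul_zpowers {G : Type*} [Group G] (g : ConjAct G) (x : G) :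
    g • Subgroup.zpowers x = Subgroup.zpowers (g • x) := by
  simp [Subgroup.pointwise_smul_def, MonoidHom.map_zpowers]

lemma gen_eq {G : Type*} [Group G] (h4 : ∀ g : G, g ^ 4 = 1) {x y : G}
    (hzp : Subgroup.zpowers x = Subgroup.zpowers y) : y = x ∨ y = x⁻¹ := by
  have h4' : ∀ g : G, g ^ (4 : ℤ) = 1 := fun g => by
    have := h4 g; rw [show (4:ℤ) = ((4:ℕ):ℤ) by norm_num, zpow_natCast, this]
  have key : ∀ z : G, ∀ m : ℤ, z ^ m = z ^ (m % 4) := by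
    intro z m
    conv_lhs => rw [← Int.emod_add_mul_ediv m 4]
    rw [zpow_add, zpow_mul, h4', one_zpow, mul_one]
  obtain ⟨m, hm⟩ := Subgroup.mem_zpowers_iff.mp (hzp ▸ Subgroup.mem_zpowers y)
  rw [key] at hm
  have h0 : 0 ≤ m % 4 := Int.emod_nonneg m (by norm_num)
  have h1 : m % 4 < 4 := Int.emod_lt_of_pos m (by norm_num)
  interval_cases hc : (m % 4)
  · -- y = 1
    simp only [zpow_zero] at hm
    left
    have hx1 : x = 1 := by
      have : x ∈ Subgroup.zpowers (1 : G) := by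
        rw [hm, ← hzp]; exact Subgroup.mem_zpowers x
      simpa [Subgroup.zpowers_one_eq_bot] using this
    rw [← hm, hx1]
  · left; simpa using hm.symm
  · -- hm : x ^ (2:ℤ) = y
    have hx : x ∈ Subgroup.zpowers y := hzp ▸ Subgroup.mem_zpowers x
    obtain ⟨j, hj⟩ := Subgroup.mem_zpowers_iff.mp hx
    have hy2 : y ^ (2:ℤ) = 1 := by
      rw [← hm, ← zpow_mul]
      norm_num
      exact h4 x
    have hx2 : x ^ (2:ℤ) = 1 := by
      rw [← hj, ← zpow_mul, mul_comm, zpow_mul, hy2, one_zpow]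
    have hy1 : y = 1 := by rw [← hm, hx2]
    have hx1 : x = 1 := by
      have : x ∈ Subgroup.zpowers (1 : G) := by rw [← hy1, ← hzp]; exact Subgroup.mem_zpowers x
      simpa [Subgroup.zpowers_one_eq_bot] using this
    left; rw [hy1, hx1]
  · right
    rw [← hm, ← zpow_neg_one,
      show (-1 : ℤ) = 3 - 4 by norm_num, zpow_sub, h4']
    simp

lemma isCyclic_zpowers' {G : Type*} [Group G] (x : G) : IsCyclic (Subgroup.zpowers x) := by
  refine ⟨⟨⟨x, Subgroup.mem_zpowers x⟩, fun a => ?_⟩⟩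
  obtain ⟨k, hk⟩ := Subgroup.mem_zpowers_iff.mp a.2
  exact Subgroup.mem_zpowers_iff.mpr ⟨k, Subtype.ext (by simpa using hk)⟩

lemma D8_pow_four (n : ℕ) : ∀ g : Fin n → DihedralGroup 4, g ^ 4 = 1 := by
  intro g; funext i
  rw [Pi.pow_apply, Pi.one_apply]
  exact (by decide : ∀ h : DihedralGroup 4, h ^ 4 = 1) (g i)

lemma D8_conj_inv {n : ℕ} (x : Fin n → DihedralGroup 4) : IsConj x x⁻¹ := by
  have h : ∀ g : DihedralGroup 4, ∃ c, c * g * c⁻¹ = g⁻¹ := by decide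
  choose c hc using h
  rw [isConj_iff]
  exact ⟨fun i => c (x i), funext fun i => by simpa using hc (x i)⟩

lemma isConj_pi_iff {n : ℕ} {x y : Fin n → DihedralGroup 4} :
    IsConj x y ↔ ∀ i, IsConj (x i) (y i) := by
  simp only [isConj_iff]
  constructor
  · rintro ⟨c, hc⟩ i
    exact ⟨c i, by simpa using congrFun hc i⟩
  · intro h
    choose c hc using h
    exact ⟨fun i => c i, funext fun i => by simpa using hc i⟩

lemma card_conjClasses_D8_pi (n : ℕ) :
    Nat.card (ConjClasses (Fin n → DihedralGroup 4)) = 5 ^ n := by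
  have e : ConjClasses (Fin n → DihedralGroup 4) ≃ (Fin n → ConjClasses (DihedralGroup 4)) := by
    refine Equiv.ofBijective
      (Quotient.lift (fun x i => ConjClasses.mk (x i))
        (fun a b hab => funext fun i =>
          ConjClasses.mk_eq_mk_iff_isConj.mpr (isConj_pi_iff.mp hab i))) ⟨?_, ?_⟩
    · intro a b
      refine Quotient.inductionOn₂ a b fun x y h => Quotient.sound ?_
      exact isConj_pi_iff.mpr fun i =>
        ConjClasses.mk_eq_mk_iff_isConj.mp (congrFun h i)
    · intro f
      refine ⟨Quotient.mk _ (fun i => (f i).out), funext fun i => ?_⟩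
      exact (f i).out_eq
  rw [Nat.card_congr e, Nat.card_fun, Nat.card_eq_fintype_card (α := Fin n), Fintype.card_fin]
  congr 1
  rw [Nat.card_eq_fintype_card]; decide


/-- The group `(D₈)ⁿ` has exactly `5ⁿ` conjugacy classes of cyclic
subgroups.  (Conjugacy classes of subgroups are the orbits of the conjugation
action of `G` on its subgroups.) -/
theorem card_cyclic_classes_D8_pow (n : ℕ) :
    Nat.card {c : Quotient (MulAction.orbitRel (ConjAct (Fin n → DihedralGroup 4))
        (Subgroup (Fin n → DihedralGroup 4))) //
      ∃ H : Subgroup (Fin n → DihedralGroup 4), IsCyclic H ∧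
        Quotient.mk (MulAction.orbitRel (ConjAct (Fin n → DihedralGroup 4))
          (Subgroup (Fin n → DihedralGroup 4))) H = c} = 5 ^ n := by
  set G := Fin n → DihedralGroup 4 with hG
  have key : ∀ x y : G, (∃ g : ConjAct G, g • Subgroup.zpowers y = Subgroup.zpowers x) →
      IsConj y x := by
    intro x y ⟨g, hg⟩
    rw [conj_smul_zpowers] at hg
    have hconj : IsConj y (g • y) :=
      isConj_iff.mpr ⟨ConjAct.ofConjAct g, (ConjAct.smul_def g y).symm⟩
    rcases gen_eq (D8_pow_four n) hg with h | h
    · rw [h]; exact hconj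
    · rw [h]; exact hconj.trans (D8_conj_inv (g • y))
  have e : ConjClasses G ≃ {c : Quotient (MulAction.orbitRel (ConjAct G) (Subgroup G)) //
      ∃ H : Subgroup G, IsCyclic H ∧
        Quotient.mk (MulAction.orbitRel (ConjAct G) (Subgroup G)) H = c} := by
    refine Equiv.ofBijective
      (Quotient.lift (fun x => (⟨Quotient.mk _ (Subgroup.zpowers x),
          Subgroup.zpowers x, isCyclic_zpowers' x, rfl⟩ : {c : Quotient (MulAction.orbitRel (ConjAct G) (Subgroup G)) //
      ∃ H : Subgroup G, IsCyclic H ∧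
        Quotient.mk (MulAction.orbitRel (ConjAct G) (Subgroup G)) H = c}))
        (fun a b hab => Subtype.ext (Quotient.sound ?_))) ⟨?_, ?_⟩
    · -- hab : IsConj a b (a ≈ b), need zpowers a ∈ orbit (zpowers b)
      obtain ⟨c, hc⟩ := isConj_iff.mp (IsConj.symm hab)
      refine MulAction.mem_orbit_iff.mpr ⟨ConjAct.toConjAct c, ?_⟩
      rw [conj_smul_zpowers, ConjAct.smul_def, ConjAct.ofConjAct_toConjAct, hc]
    · intro a b
      refine Quotient.inductionOn₂ a b fun x y h => Quotient.sound ?_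
      have h' := congrArg Subtype.val h
      change Quotient.mk (MulAction.orbitRel (ConjAct G) (Subgroup G)) (Subgroup.zpowers x) =
        Quotient.mk (MulAction.orbitRel (ConjAct G) (Subgroup G)) (Subgroup.zpowers y) at h'
      obtain ⟨g, hg⟩ := MulAction.mem_orbit_iff.mp (Quotient.exact h')
      exact (key x y ⟨g, hg⟩).symm
    · rintro ⟨c, H, hH, hmk⟩
      obtain ⟨x, rfl⟩ := cyclic_eq_zpowers H hH
      exact ⟨Quotient.mk _ x, Subtype.ext hmk⟩
  rw [← Nat.card_congr e, card_conjClasses_D8_pi]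
end
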